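/- Let K[SL(2)] = K[α,β,γ,δ]/(αδ−βγ−1) and let φ*: K[Y] → K[SL(2)] be given on monomial generators by φ*(x₁^m x₂^{q−m} y₁^l y₂^{p−l}) = α^m γ^{q−m} β^l δ^{p−l} (0 ≤ m ≤ q, 0 ≤ l ≤ p, q > p ≥ 1, gcd(p,q)=1). If a monomial α^t β^w (t, w ≥ 0, (t,w) ≠ (0,0)) lies in the image of φ*, then w/t ≤ p/q. -/

import Mathlib

open MvPolynomial
open scoped BigOperators

set_option maxHeartbeats 1000000 in
/-- Proposition 7 (polynomial form).  In `K[α,β,γ,δ]` with `α = X 0`, `β = X 1`,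
`γ = X 2`, `δ = X 3`: if
`Σᵢ zᵢ α^{mᵢ} γ^{q−mᵢ} β^{lᵢ} δ^{p−lᵢ} ≡ α^t β^w  (mod (αδ−βγ−1))`
with `0 ≤ mᵢ ≤ q`, `0 ≤ lᵢ ≤ p`, `zᵢ` not all zero, `1 ≤ p < q`, `gcd(p,q)=1`,
then `w/t ≤ p/q`, i.e. `q·w ≤ p·t`. -/
theorem stmt7 (K : Type*) [Field K] [IsAlgClosed K] [CharZero K]
    (p q : ℕ) (hp : 1 ≤ p) (hpq : p < q) (hcop : Nat.Coprime p q)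
    (N : ℕ) (z : Fin N → K) (m l : Fin N → ℕ)
    (hm : ∀ i, m i ≤ q) (hl : ∀ i, l i ≤ p) (hz : ∃ i, z i ≠ 0)
    (t w : ℕ)
    (h : (∑ i, C (z i) * X 0 ^ m i * X 2 ^ (q - m i) * X 1 ^ l i * X 3 ^ (p - l i))
          - X 0 ^ t * X 1 ^ w
        ∈ Ideal.span {(X 0 * X 3 - X 1 * X 2 - 1 : MvPolynomial (Fin 4) K)}) :
    q * w ≤ p * t := by
  classical
  set R := MvPolynomial (Fin 2) K with hR
  set F := FractionRing R with hF
  set ι : R →+* F := algebraMap R F with hι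
  have hinj : Function.Injective ι := IsFractionRing.injective R F
  set u : F := ι (X 0) with hu_def
  set v : F := ι (X 1) with hv_def
  have hu : u ≠ 0 := by
    intro hh
    exact (X_ne_zero (R := K) (0 : Fin 2)) (hinj (by simpa [hu_def] using hh))
  set f : Fin 4 → F := ![u, v, 0, u⁻¹] with hf
  set φ : MvPolynomial (Fin 4) K →+* F := eval₂Hom (ι.comp (C : K →+* R)) f with hφ
  have hgen : φ (X 0 * X 3 - X 1 * X 2 - 1) = 0 := by
    simp [hφ, hf, mul_inv_cancel₀ hu]
  obtain ⟨c, hc⟩ := Ideal.mem_span_singleton'.mp h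
  have heq : φ (∑ i, C (z i) * X 0 ^ m i * X 2 ^ (q - m i) * X 1 ^ l i * X 3 ^ (p - l i))
      = φ (X 0 ^ t * X 1 ^ w) := by
    have h2 := congrArg φ hc
    rw [map_mul, hgen, mul_zero, map_sub] at h2
    exact sub_eq_zero.mp h2.symm
  have hφterm : ∀ (a : K) (m' l' : ℕ),
      φ (C a * X 0 ^ m' * X 2 ^ (q - m') * X 1 ^ l' * X 3 ^ (p - l'))
        = ι (C a) * u ^ m' * (0:F) ^ (q - m') * v ^ l' * (u⁻¹) ^ (p - l') := by
    intro a m' l'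
    simp [hφ, hf]
  set ci : Fin N → K := fun i => if m i = q then z i else 0 with hci
  set ai : Fin N → ℕ := fun i => q - (p - l i) with hai
  have hterm : ∀ i, φ (C (z i) * X 0 ^ m i * X 2 ^ (q - m i) * X 1 ^ l i * X 3 ^ (p - l i))
      = ι (C (ci i) * X 0 ^ (ai i) * X 1 ^ (l i)) := by
    intro i
    rw [hφterm, map_mul, map_mul, map_pow, map_pow]
    by_cases hmi : m i = q
    · have hsle : p - l i ≤ q := le_trans (Nat.sub_le p (l i)) (le_of_lt hpq)
      have hci' : ci i = z i := if_pos hmi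
      have key : (u : F) ^ (ai i) = u ^ q * (u⁻¹) ^ (p - l i) := by
        rw [hai, pow_sub₀ u hu hsle, inv_pow]
      rw [hci', key, hmi, Nat.sub_self, pow_zero]
      show ι (C (z i)) * u ^ q * 1 * v ^ l i * u⁻¹ ^ (p - l i)
        = ι (C (z i)) * (u ^ q * u⁻¹ ^ (p - l i)) * v ^ l i
      ring
    · have hq : q - m i ≠ 0 := by have := hm i; omega
      have hci' : ci i = 0 := if_neg hmi
      rw [hci', zero_pow hq]
      simp
  have hPQ : (∑ i, C (ci i) * X 0 ^ (ai i) * X 1 ^ (l i) : R) = X 0 ^ t * X 1 ^ w := by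
    apply hinj
    calc ι (∑ i, C (ci i) * X 0 ^ (ai i) * X 1 ^ (l i))
        = ∑ i, ι (C (ci i) * X 0 ^ (ai i) * X 1 ^ (l i)) := map_sum ι _ _
      _ = ∑ i, φ (C (z i) * X 0 ^ m i * X 2 ^ (q - m i) * X 1 ^ l i * X 3 ^ (p - l i)) :=
          Finset.sum_congr rfl fun i _ => (hterm i).symm
      _ = φ (∑ i, C (z i) * X 0 ^ m i * X 2 ^ (q - m i) * X 1 ^ l i * X 3 ^ (p - l i)) :=
          (map_sum φ _ _).symm
      _ = φ (X 0 ^ t * X 1 ^ w) := heq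
      _ = ι (X 0 ^ t * X 1 ^ w) := by
          rw [map_mul, map_pow, map_pow, map_mul, map_pow, map_pow]
          simp [hφ, hf]
          rfl
  have mono : ∀ (c : K) (a b : ℕ), (C c * X 0 ^ a * X 1 ^ b : R)
      = monomial (Finsupp.single 0 a + Finsupp.single 1 b) c := by
    intro c a b
    rw [X_pow_eq_monomial, X_pow_eq_monomial, C_mul_monomial, monomial_mul, mul_one, mul_one]
  have hQ : (X 0 ^ t * X 1 ^ w : R) = C (1:K) * X 0 ^ t * X 1 ^ w := by
    rw [map_one, one_mul]
  rw [hQ] at hPQ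
  simp only [mono] at hPQ
  have hexists : ∃ i, (Finsupp.single (0 : Fin 2) (ai i) + Finsupp.single 1 (l i))
      = (Finsupp.single (0 : Fin 2) t + Finsupp.single 1 w) := by
    by_contra hne
    push_neg at hne
    have h1 := congrArg (coeff (Finsupp.single (0 : Fin 2) t + Finsupp.single 1 w)) hPQ
    rw [coeff_sum] at h1
    simp only [coeff_monomial] at h1
    rw [Finset.sum_eq_zero (fun i _ => if_neg (hne i))] at h1
    simp at h1
  obtain ⟨i, hi⟩ := hexists
  have e0 : ai i = t := by
    have h0 := DFunLike.congr_fun hi (0 : Fin 2)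
    simpa [Finsupp.single_apply] using h0
  have e1 : l i = w := by
    have h1 := DFunLike.congr_fun hi (1 : Fin 2)
    simpa [Finsupp.single_apply] using h1
  have hw : w ≤ p := e1 ▸ hl i
  have ht : t = (q - p) + w := by
    have h3 : ai i = q - (p - l i) := rfl
    have := hl i
    omega
  obtain ⟨d, hd⟩ : ∃ d, q = p + d := ⟨q - p, by omega⟩
  have ht' : t = d + w := by omega
  have h2 : d * w ≤ d * p := Nat.mul_le_mul_left d hw
  subst hd ht'
  nlinarith
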